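/- If U, W : [0,1]² → [0,∞) are symmetric bounded measurable functions with U(x,y) + W(x,y) ≥ 2q pointwise for some constant q ≥ 0, then t(K₃, W) + t(K₃, U) ≥ 2q³, where t(K₃, W) = ∫∫∫ W(x,y)W(x,z)W(y,z) dx dy dz. -/

import Mathlib

open MeasureTheory Real

noncomputable section


def I01 : Set ℝ := Set.Icc 0 1

local notation "μ0" => (volume.restrict I01 : Measure ℝ)
local notation "ν0" => (Measure.prod (volume.restrict I01) (Measure.prod (volume.restrict I01) (volume.restrict I01)) : Measure (ℝ × ℝ × ℝ))

instance : IsProbabilityMeasure (volume.restrict I01 : Measure ℝ) :=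
  ⟨by simp [I01, Real.volume_Icc]⟩

lemma intBdd {α : Type*} [MeasurableSpace α] (ρ : Measure α) [IsFiniteMeasure ρ]
    {g : α → ℝ} (hg : Measurable g) {C : ℝ} (hb : ∀ a, |g a| ≤ C) : Integrable g ρ :=
  ⟨hg.aestronglyMeasurable,
    HasFiniteIntegral.of_bounded (C := C) (ae_of_all _ fun a => by
      simpa [Real.norm_eq_abs] using hb a)⟩

lemma iter_eq3 {G : ℝ → ℝ → ℝ → ℝ}
    (hG : Measurable fun p : ℝ × ℝ × ℝ => G p.1 p.2.1 p.2.2) {C : ℝ}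
    (hb : ∀ x y z, |G x y z| ≤ C) :
    ∫ p : ℝ × ℝ × ℝ, G p.1 p.2.1 p.2.2 ∂ν0 = ∫ x, ∫ y, ∫ z, G x y z ∂μ0 ∂μ0 ∂μ0 := by
  have hint : Integrable (fun p : ℝ × ℝ × ℝ => G p.1 p.2.1 p.2.2) ν0 :=
    intBdd _ hG fun p => hb _ _ _
  rw [MeasureTheory.integral_prod _ hint]
  refine integral_congr_ae (ae_of_all _ fun x => ?_)
  have hx : Integrable (fun p : ℝ × ℝ => G x p.1 p.2) (Measure.prod μ0 μ0) :=
    intBdd _ (hG.comp (measurable_prodMk_left (x := x))) fun p => hb _ _ _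
  exact MeasureTheory.integral_prod _ hx

def e23 : ℝ × ℝ × ℝ ≃ᵐ ℝ × ℝ × ℝ :=
  (MeasurableEquiv.refl ℝ).prodCongr MeasurableEquiv.prodComm

def e12 : ℝ × ℝ × ℝ ≃ᵐ ℝ × ℝ × ℝ :=
  MeasurableEquiv.prodAssoc.symm.trans
    ((MeasurableEquiv.prodComm.prodCongr (MeasurableEquiv.refl ℝ)).trans
      MeasurableEquiv.prodAssoc)

lemma e23_apply (p : ℝ × ℝ × ℝ) : e23 p = (p.1, p.2.2, p.2.1) := rfl
lemma e12_apply (p : ℝ × ℝ × ℝ) : e12 p = (p.2.1, p.1, p.2.2) := rfl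

def e13 : ℝ × ℝ × ℝ ≃ᵐ ℝ × ℝ × ℝ := e12.trans (e23.trans e12)
def ecyc : ℝ × ℝ × ℝ ≃ᵐ ℝ × ℝ × ℝ := e12.trans e23

lemma e13_apply (p : ℝ × ℝ × ℝ) : e13 p = (p.2.2, p.2.1, p.1) := rfl
lemma ecyc_apply (p : ℝ × ℝ × ℝ) : ecyc p = (p.2.1, p.2.2, p.1) := rfl

lemma mp23 : MeasurePreserving (⇑e23) ν0 ν0 := by
  have h : ⇑e23 = Prod.map (id : ℝ → ℝ) (Prod.swap : ℝ × ℝ → ℝ × ℝ) := rfl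
  rw [h]
  exact (MeasurePreserving.id μ0).prod Measure.measurePreserving_swap

lemma mp12 : MeasurePreserving (⇑e12) ν0 ν0 := by
  have h1 : MeasurePreserving (⇑(MeasurableEquiv.prodAssoc (α := ℝ) (β := ℝ) (γ := ℝ)).symm)
      ν0 ((Measure.prod μ0 μ0).prod μ0) :=
    (measurePreserving_prodAssoc μ0 μ0 μ0).symm _
  have h2 : MeasurePreserving (Prod.map (Prod.swap : ℝ × ℝ → ℝ × ℝ) (id : ℝ → ℝ))
      ((Measure.prod μ0 μ0).prod μ0) ((Measure.prod μ0 μ0).prod μ0) :=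
    Measure.measurePreserving_swap.prod (MeasurePreserving.id μ0)
  have h3 := measurePreserving_prodAssoc μ0 μ0 μ0
  exact h3.comp (h2.comp h1)

lemma mp13 : MeasurePreserving (⇑e13) ν0 ν0 := mp12.comp (mp23.comp mp12)
lemma mpcyc : MeasurePreserving (⇑ecyc) ν0 ν0 := mp23.comp mp12

/-- Triangle density of a kernel `W`. -/
def tK3 (W : ℝ → ℝ → ℝ) : ℝ :=
  ∫ x in I01, ∫ y in I01, ∫ z in I01, W x y * W x z * W y z

lemma goodman_core {A : ℝ → ℝ → ℝ} {c : ℝ} (hc : 0 ≤ c)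
    (hmeas : Measurable (Function.uncurry A)) (hsymm : ∀ x y, A x y = A y x)
    (h0 : ∀ x y, 0 ≤ A x y) (h1 : ∀ x y, A x y ≤ c) :
    c ^ 3 / 4 ≤ tK3 A + tK3 fun x y => c - A x y := by
  have bnd : ∀ x y, |A x y| ≤ c := fun x y => abs_le.mpr ⟨by linarith [h0 x y], h1 x y⟩
  have bnd' : ∀ x y, |c - A x y| ≤ c := fun x y =>
    abs_le.mpr ⟨by linarith [h1 x y], by linarith [h0 x y]⟩
  have ma1 : Measurable fun p : ℝ × ℝ × ℝ => A p.1 p.2.1 :=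
    hmeas.comp (measurable_fst.prodMk measurable_snd.fst)
  have ma2 : Measurable fun p : ℝ × ℝ × ℝ => A p.1 p.2.2 :=
    hmeas.comp (measurable_fst.prodMk measurable_snd.snd)
  have ma3 : Measurable fun p : ℝ × ℝ × ℝ => A p.2.1 p.2.2 :=
    hmeas.comp (measurable_snd.fst.prodMk measurable_snd.snd)
  have degm : Measurable fun x => ∫ y, A x y ∂μ0 :=
    (hmeas.stronglyMeasurable.integral_prod_right').measurable
  have degbd : ∀ x, |∫ y, A x y ∂μ0| ≤ c := by
    intro x
    have h := norm_integral_le_of_norm_le_const (μ := μ0) (f := fun y => A x y) (C := c)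
      (ae_of_all _ fun y => by simpa [Real.norm_eq_abs] using bnd x y)
    simpa [Real.norm_eq_abs, measure_univ] using h
  have bmul : ∀ x y x' y', |A x y * A x' y'| ≤ c * c := fun x y x' y' => by
    rw [abs_mul]; exact mul_le_mul (bnd x y) (bnd x' y') (abs_nonneg _) hc
  have btri : ∀ x y x' y' x'' y'', |A x y * A x' y' * A x'' y''| ≤ c * c * c :=
    fun x y x' y' x'' y'' => by
      rw [abs_mul]
      exact mul_le_mul (bmul x y x' y') (bnd x'' y'') (abs_nonneg _) (mul_nonneg hc hc)
  -- the six basic integral identities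
  have I1 : (∫ p : ℝ × ℝ × ℝ, A p.1 p.2.1 ∂ν0) = ∫ x, ∫ y, A x y ∂μ0 ∂μ0 := by
    rw [iter_eq3 (G := fun x y _ => A x y) ma1 (C := c) fun x y _ => bnd x y]
    simp [integral_const]
  have I2 : (∫ p : ℝ × ℝ × ℝ, A p.1 p.2.2 ∂ν0) = ∫ x, ∫ y, A x y ∂μ0 ∂μ0 :=
    (mp23.integral_comp' (fun p : ℝ × ℝ × ℝ => A p.1 p.2.1)).trans I1
  have I3 : (∫ p : ℝ × ℝ × ℝ, A p.2.1 p.2.2 ∂ν0) = ∫ x, ∫ y, A x y ∂μ0 ∂μ0 :=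
    (mpcyc.integral_comp' (fun p : ℝ × ℝ × ℝ => A p.1 p.2.1)).trans I1
  have P1 : (∫ p : ℝ × ℝ × ℝ, A p.1 p.2.1 * A p.1 p.2.2 ∂ν0)
      = ∫ x, (∫ y, A x y ∂μ0) ^ 2 ∂μ0 := by
    rw [iter_eq3 (G := fun x y z => A x y * A x z) (ma1.mul ma2) (C := c * c)
      fun x y z => bmul x y x z]
    refine integral_congr_ae (ae_of_all _ fun x => ?_)
    simp only [integral_const_mul]
    rw [integral_mul_const, sq]
  have P2 : (∫ p : ℝ × ℝ × ℝ, A p.1 p.2.1 * A p.2.1 p.2.2 ∂ν0)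
      = ∫ x, (∫ y, A x y ∂μ0) ^ 2 ∂μ0 := by
    have e : ∀ p : ℝ × ℝ × ℝ, A p.1 p.2.1 * A p.2.1 p.2.2 = A p.2.1 p.1 * A p.2.1 p.2.2 :=
      fun p => by rw [hsymm p.1 p.2.1]
    calc (∫ p : ℝ × ℝ × ℝ, A p.1 p.2.1 * A p.2.1 p.2.2 ∂ν0)
        = ∫ p : ℝ × ℝ × ℝ, A p.2.1 p.1 * A p.2.1 p.2.2 ∂ν0 :=
          integral_congr_ae (ae_of_all _ e)
      _ = ∫ x, (∫ y, A x y ∂μ0) ^ 2 ∂μ0 :=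
          (mp12.integral_comp' (fun p : ℝ × ℝ × ℝ => A p.1 p.2.1 * A p.1 p.2.2)).trans P1
  have P3 : (∫ p : ℝ × ℝ × ℝ, A p.1 p.2.2 * A p.2.1 p.2.2 ∂ν0)
      = ∫ x, (∫ y, A x y ∂μ0) ^ 2 ∂μ0 := by
    have e : ∀ p : ℝ × ℝ × ℝ, A p.1 p.2.2 * A p.2.1 p.2.2 = A p.2.2 p.2.1 * A p.2.2 p.1 :=
      fun p => by rw [hsymm p.2.2 p.2.1, hsymm p.2.2 p.1, mul_comm]
    calc (∫ p : ℝ × ℝ × ℝ, A p.1 p.2.2 * A p.2.1 p.2.2 ∂ν0)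
        = ∫ p : ℝ × ℝ × ℝ, A p.2.2 p.2.1 * A p.2.2 p.1 ∂ν0 :=
          integral_congr_ae (ae_of_all _ e)
      _ = ∫ x, (∫ y, A x y ∂μ0) ^ 2 ∂μ0 :=
          (mp13.integral_comp' (fun p : ℝ × ℝ × ℝ => A p.1 p.2.1 * A p.1 p.2.2)).trans P1
  -- triangle terms
  have TA : tK3 A = ∫ p : ℝ × ℝ × ℝ, A p.1 p.2.1 * A p.1 p.2.2 * A p.2.1 p.2.2 ∂ν0 :=
    (iter_eq3 (G := fun x y z => A x y * A x z * A y z) ((ma1.mul ma2).mul ma3)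
      (C := c * c * c) fun x y z => btri x y x z y z).symm
  have TB : tK3 (fun x y => c - A x y)
      = ∫ p : ℝ × ℝ × ℝ, (c - A p.1 p.2.1) * (c - A p.1 p.2.2) * (c - A p.2.1 p.2.2) ∂ν0 := by
    refine (iter_eq3 (G := fun x y z => (c - A x y) * (c - A x z) * (c - A y z))
      (((measurable_const.sub ma1).mul (measurable_const.sub ma2)).mul
        (measurable_const.sub ma3)) (C := c * c * c) fun x y z => ?_).symm
    rw [abs_mul, abs_mul]
    exact mul_le_mul (mul_le_mul (bnd' x y) (bnd' x z) (abs_nonneg _) hc) (bnd' y z)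
      (abs_nonneg _) (mul_nonneg hc hc)
  -- integrability of the monomials
  have i1 : Integrable (fun p : ℝ × ℝ × ℝ => A p.1 p.2.1) ν0 := intBdd _ ma1 fun p => bnd _ _
  have i2 : Integrable (fun p : ℝ × ℝ × ℝ => A p.1 p.2.2) ν0 := intBdd _ ma2 fun p => bnd _ _
  have i3 : Integrable (fun p : ℝ × ℝ × ℝ => A p.2.1 p.2.2) ν0 := intBdd _ ma3 fun p => bnd _ _
  have i12 : Integrable (fun p : ℝ × ℝ × ℝ => A p.1 p.2.1 * A p.1 p.2.2) ν0 :=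
    intBdd _ (ma1.mul ma2) fun p => bmul _ _ _ _
  have i13 : Integrable (fun p : ℝ × ℝ × ℝ => A p.1 p.2.1 * A p.2.1 p.2.2) ν0 :=
    intBdd _ (ma1.mul ma3) fun p => bmul _ _ _ _
  have i23 : Integrable (fun p : ℝ × ℝ × ℝ => A p.1 p.2.2 * A p.2.1 p.2.2) ν0 :=
    intBdd _ (ma2.mul ma3) fun p => bmul _ _ _ _
  have i123 : Integrable (fun p : ℝ × ℝ × ℝ => A p.1 p.2.1 * A p.1 p.2.2 * A p.2.1 p.2.2) ν0 :=
    intBdd _ ((ma1.mul ma2).mul ma3) fun p => btri _ _ _ _ _ _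
  have C0 : Integrable (fun _ : ℝ × ℝ × ℝ => c ^ 3) ν0 := integrable_const _
  have j1 := i1.const_mul (c ^ 2)
  have j2 := i2.const_mul (c ^ 2)
  have j3 := i3.const_mul (c ^ 2)
  have k1 := i12.const_mul c
  have k2 := i13.const_mul c
  have k3 := i23.const_mul c
  set d := ∫ x, ∫ y, A x y ∂μ0 ∂μ0 with hd
  set D2 := ∫ x, (∫ y, A x y ∂μ0) ^ 2 ∂μ0 with hD2
  have expand : (fun p : ℝ × ℝ × ℝ =>
      (c - A p.1 p.2.1) * (c - A p.1 p.2.2) * (c - A p.2.1 p.2.2))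
      = fun p => (((((c ^ 3 - c ^ 2 * A p.1 p.2.1) - c ^ 2 * A p.1 p.2.2)
          - c ^ 2 * A p.2.1 p.2.2) + c * (A p.1 p.2.1 * A p.1 p.2.2))
          + c * (A p.1 p.2.1 * A p.2.1 p.2.2)) + c * (A p.1 p.2.2 * A p.2.1 p.2.2)
          - A p.1 p.2.1 * A p.1 p.2.2 * A p.2.1 p.2.2 := by
    funext p; ring
  have s1 : Integrable (fun p : ℝ × ℝ × ℝ => c ^ 3 - c ^ 2 * A p.1 p.2.1) ν0 := C0.sub j1
  have s2 : Integrable (fun p : ℝ × ℝ × ℝ =>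
      c ^ 3 - c ^ 2 * A p.1 p.2.1 - c ^ 2 * A p.1 p.2.2) ν0 := s1.sub j2
  have s3 : Integrable (fun p : ℝ × ℝ × ℝ =>
      c ^ 3 - c ^ 2 * A p.1 p.2.1 - c ^ 2 * A p.1 p.2.2 - c ^ 2 * A p.2.1 p.2.2) ν0 := s2.sub j3
  have s4 : Integrable (fun p : ℝ × ℝ × ℝ =>
      c ^ 3 - c ^ 2 * A p.1 p.2.1 - c ^ 2 * A p.1 p.2.2 - c ^ 2 * A p.2.1 p.2.2
        + c * (A p.1 p.2.1 * A p.1 p.2.2)) ν0 := s3.add k1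
  have s5 : Integrable (fun p : ℝ × ℝ × ℝ =>
      c ^ 3 - c ^ 2 * A p.1 p.2.1 - c ^ 2 * A p.1 p.2.2 - c ^ 2 * A p.2.1 p.2.2
        + c * (A p.1 p.2.1 * A p.1 p.2.2) + c * (A p.1 p.2.1 * A p.2.1 p.2.2)) ν0 := s4.add k2
  have s6 : Integrable (fun p : ℝ × ℝ × ℝ =>
      c ^ 3 - c ^ 2 * A p.1 p.2.1 - c ^ 2 * A p.1 p.2.2 - c ^ 2 * A p.2.1 p.2.2
        + c * (A p.1 p.2.1 * A p.1 p.2.2) + c * (A p.1 p.2.1 * A p.2.1 p.2.2)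
        + c * (A p.1 p.2.2 * A p.2.1 p.2.2)) ν0 := s5.add k3
  have hTB2 : tK3 (fun x y => c - A x y)
      = c ^ 3 - c ^ 2 * d - c ^ 2 * d - c ^ 2 * d + c * D2 + c * D2 + c * D2 - tK3 A := by
    rw [TB, TA, expand,
      integral_sub s6 i123,
      integral_add s5 k3,
      integral_add s4 k2,
      integral_add s3 k1,
      integral_sub s2 j3,
      integral_sub s1 j2,
      integral_sub C0 j1,
      integral_const, integral_const_mul, integral_const_mul, integral_const_mul,
      integral_const_mul, integral_const_mul, integral_const_mul, I1, I2, I3, P1, P2, P3]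
    simp [measure_univ]
  -- Cauchy–Schwarz:  D2 ≥ d ^ 2
  have hdeg : Integrable (fun x => ∫ y, A x y ∂μ0) μ0 := intBdd _ degm degbd
  have hdeg2 : Integrable (fun x => (∫ y, A x y ∂μ0) ^ 2) μ0 := by
    refine intBdd _ (degm.pow_const 2) (C := c ^ 2) fun x => ?_
    rw [abs_pow]
    exact pow_le_pow_left₀ (abs_nonneg _) (degbd x) 2
  have hCS : d ^ 2 ≤ D2 := by
    have hnn : 0 ≤ ∫ x, ((∫ y, A x y ∂μ0) - d) ^ 2 ∂μ0 :=
      integral_nonneg fun x => sq_nonneg _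
    have expand2 : (fun x => ((∫ y, A x y ∂μ0) - d) ^ 2)
        = fun x => ((∫ y, A x y ∂μ0) ^ 2 - (2 * d) * (∫ y, A x y ∂μ0)) + d ^ 2 :=
      funext fun x => by ring
    have t1 : Integrable (fun x =>
        (∫ y, A x y ∂μ0) ^ 2 - 2 * d * ∫ y, A x y ∂μ0) μ0 := hdeg2.sub (hdeg.const_mul _)
    rw [expand2, integral_add t1 (integrable_const _),
      integral_sub hdeg2 (hdeg.const_mul _), integral_const_mul, integral_const] at hnn
    simp only [measure_univ, probReal_univ, ENNReal.toReal_one, one_smul, ← hd, ← hD2] at hnn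
    nlinarith [hnn]
  rw [hTB2]
  nlinarith [mul_nonneg hc (sub_nonneg.mpr hCS), mul_nonneg hc (sq_nonneg (d - c / 2))]

lemma tK3_mono {A B : ℝ → ℝ → ℝ} (hA : Measurable (Function.uncurry A))
    (hB : Measurable (Function.uncurry B)) (h0 : ∀ x y, 0 ≤ A x y)
    (hle : ∀ x y, A x y ≤ B x y) {C : ℝ} (hC : ∀ x y, B x y ≤ C) :
    tK3 A ≤ tK3 B := by
  have hB0 : ∀ x y, 0 ≤ B x y := fun x y => (h0 x y).trans (hle x y)
  have hC0 : 0 ≤ C := (hB0 0 0).trans (hC 0 0)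
  have bndA : ∀ x y, |A x y| ≤ C := fun x y =>
    abs_le.mpr ⟨by linarith [h0 x y], (hle x y).trans (hC x y)⟩
  have bndB : ∀ x y, |B x y| ≤ C := fun x y => abs_le.mpr ⟨by linarith [hB0 x y], hC x y⟩
  have mA : Measurable fun p : ℝ × ℝ × ℝ => A p.1 p.2.1 * A p.1 p.2.2 * A p.2.1 p.2.2 :=
    ((hA.comp (measurable_fst.prodMk measurable_snd.fst)).mul
      (hA.comp (measurable_fst.prodMk measurable_snd.snd))).mul
      (hA.comp (measurable_snd.fst.prodMk measurable_snd.snd))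
  have mB : Measurable fun p : ℝ × ℝ × ℝ => B p.1 p.2.1 * B p.1 p.2.2 * B p.2.1 p.2.2 :=
    ((hB.comp (measurable_fst.prodMk measurable_snd.fst)).mul
      (hB.comp (measurable_fst.prodMk measurable_snd.snd))).mul
      (hB.comp (measurable_snd.fst.prodMk measurable_snd.snd))
  have bb : ∀ (W : ℝ → ℝ → ℝ), (∀ x y, |W x y| ≤ C) →
      ∀ x y z : ℝ, |W x y * W x z * W y z| ≤ C * C * C := fun W h x y z => by
    rw [abs_mul, abs_mul]
    exact mul_le_mul (mul_le_mul (h x y) (h x z) (abs_nonneg _) hC0) (h y z)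
      (abs_nonneg _) (mul_nonneg hC0 hC0)
  have eA : tK3 A = ∫ p : ℝ × ℝ × ℝ, A p.1 p.2.1 * A p.1 p.2.2 * A p.2.1 p.2.2 ∂ν0 :=
    (iter_eq3 (G := fun x y z => A x y * A x z * A y z) mA (C := C * C * C) (bb A bndA)).symm
  have eB : tK3 B = ∫ p : ℝ × ℝ × ℝ, B p.1 p.2.1 * B p.1 p.2.2 * B p.2.1 p.2.2 ∂ν0 :=
    (iter_eq3 (G := fun x y z => B x y * B x z * B y z) mB (C := C * C * C) (bb B bndB)).symm
  rw [eA, eB]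
  refine integral_mono (intBdd _ mA fun p => bb A bndA _ _ _)
    (intBdd _ mB fun p => bb B bndB _ _ _) fun p => ?_
  exact mul_le_mul (mul_le_mul (hle _ _) (hle _ _) (h0 _ _) (hB0 _ _)) (hle _ _) (h0 _ _)
    (mul_nonneg (hB0 _ _) (hB0 _ _))

theorem stmt_2 (U W : ℝ → ℝ → ℝ) (q : ℝ) (hq : 0 ≤ q)
    (hUnn : ∀ x y, 0 ≤ U x y) (hWnn : ∀ x y, 0 ≤ W x y)
    (hUsymm : ∀ x y, U x y = U y x) (hWsymm : ∀ x y, W x y = W y x)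
    (hUmeas : Measurable (Function.uncurry U))
    (hWmeas : Measurable (Function.uncurry W))
    (hUbdd : ∃ C : ℝ, ∀ x y, U x y ≤ C)
    (hWbdd : ∃ C : ℝ, ∀ x y, W x y ≤ C)
    (hsum : ∀ x y, 2 * q ≤ U x y + W x y) :
    tK3 W + tK3 U ≥ 2 * q ^ 3 := by
  obtain ⟨CU, hCU⟩ := hUbdd
  obtain ⟨CW, hCW⟩ := hWbdd
  set c : ℝ := 2 * q with hc
  have hc0 : 0 ≤ c := by positivity
  set A : ℝ → ℝ → ℝ := fun x y => min (W x y) c with hA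
  have hAmeas : Measurable (Function.uncurry A) := hWmeas.min measurable_const
  have hAsymm : ∀ x y, A x y = A y x := fun x y => by simp [hA, hWsymm x y]
  have hA0 : ∀ x y, 0 ≤ A x y := fun x y => le_min (hWnn x y) hc0
  have hA1 : ∀ x y, A x y ≤ c := fun x y => min_le_right _ _
  have hAW : ∀ x y, A x y ≤ W x y := fun x y => min_le_left _ _
  have hBmeas : Measurable (Function.uncurry fun x y => c - A x y) :=
    measurable_const.sub hAmeas
  have hB0 : ∀ x y, 0 ≤ c - A x y := fun x y => by linarith [hA1 x y]
  have hBU : ∀ x y, c - A x y ≤ U x y := by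
    intro x y
    rcases le_total (W x y) c with h | h
    · have : A x y = W x y := min_eq_left h
      rw [this]
      linarith [hsum x y]
    · have : A x y = c := min_eq_right h
      rw [this]
      simpa using hUnn x y
  have h1 : tK3 A ≤ tK3 W := tK3_mono hAmeas hWmeas hA0 hAW hCW
  have h2 : tK3 (fun x y => c - A x y) ≤ tK3 U := tK3_mono hBmeas hUmeas hB0 hBU hCU
  have h3 := goodman_core hc0 hAmeas hAsymm hA0 hA1
  have : c ^ 3 / 4 = 2 * q ^ 3 := by rw [hc]; ring
  linarith
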